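/- Let M > 1 and 0 < Υ < 1 be real numbers, and let w ∈ ℂ with Re(w) > 0. Then the Mellin transform of F_{Υ,M} satisfies ∫₀^∞ F_{Υ,M}(x) x^{w−1} dx = (M^w − M^{(1−Υ)w}) / (Υ w² log M). -/

import Mathlib

open MeasureTheory Real

/-- The mollifier cutoff function `F_{Υ,M}`. -/
noncomputable def Fcut (Υ M : ℝ) (x : ℝ) : ℝ :=
  if x ≤ M ^ (1 - Υ) then 1
  else if x ≤ M then Real.log (M / x) / (Υ * Real.log M)
  else 0

private lemma mellin_Fcut_aux (X Y L u w : ℂ) (hw : w ≠ 0) (hu : u ≠ 0) (hL : L ≠ 0) :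
    X / w + ((((L - L) * (Y / w) + Y / w / w) / (u * L))
      - (((L - (1 - u) * L) * (X / w) + X / w / w) / (u * L)))
    = (Y - X) / (u * w ^ 2 * L) := by
  rw [div_sub_div_same, div_add_div _ _ hw (mul_ne_zero hu hL),
    div_eq_div_iff (mul_ne_zero hw (mul_ne_zero hu hL))
      (by exact mul_ne_zero (mul_ne_zero hu (pow_ne_zero 2 hw)) hL)]
  field_simp
  ring

theorem mellin_transform_of_Fcut (Υ M : ℝ) (hΥ₀ : 0 < Υ) (hΥ₁ : Υ < 1) (hM : 1 < M)
    (w : ℂ) (hw : 0 < w.re) :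
    IntegrableOn (fun x : ℝ => (Fcut Υ M x : ℂ) * (x : ℂ) ^ (w - 1)) (Set.Ioi 0) ∧
      (∫ x in Set.Ioi (0 : ℝ), (Fcut Υ M x : ℂ) * (x : ℂ) ^ (w - 1)) =
        ((M : ℂ) ^ w - (M : ℂ) ^ ((1 - (Υ : ℂ)) * w)) /
          ((Υ : ℂ) * w ^ 2 * (Real.log M : ℂ)) := by
  have hM0 : (0:ℝ) < M := lt_trans one_pos hM
  set A := M ^ (1 - Υ) with hAdef
  have hA0 : (0:ℝ) < A := Real.rpow_pos_of_pos hM0 _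
  have hAM : A < M := by
    calc A < M ^ (1:ℝ) := (Real.rpow_lt_rpow_left_iff hM).2 (by linarith)
      _ = M := Real.rpow_one M
  have hlogM : 0 < Real.log M := Real.log_pos hM
  have hw0 : w ≠ 0 := by intro h; rw [h] at hw; simp at hw
  have hw1 : w - 1 ≠ -1 := by intro h; apply hw0; linear_combination h
  have hre : -1 < (w-1).re := by simp [Complex.sub_re]; linarith
  have hlogA : Real.log A = (1 - Υ) * Real.log M := Real.log_rpow hM0 _
  set f : ℝ → ℂ := fun x => (Fcut Υ M x : ℂ) * (x : ℂ) ^ (w - 1) with hfdef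
  set g2 : ℝ → ℂ := fun x =>
    ((Real.log (M / x) / (Υ * Real.log M) : ℝ) : ℂ) * (x:ℂ)^(w-1) with hg2def
  -- pointwise identifications
  have hf1 : ∀ x ∈ Set.Ioc (0:ℝ) A, f x = (x:ℂ)^(w-1) := by
    intro x hx
    simp only [hfdef, Fcut, if_pos (show x ≤ M ^ (1 - Υ) from hx.2)]
    simp
  have hf2 : ∀ x ∈ Set.Ioc A M, f x = g2 x := by
    intro x hx
    simp only [hfdef, hg2def, Fcut, if_neg (show ¬ x ≤ M ^ (1 - Υ) from not_le.2 hx.1), if_pos hx.2]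
  have hf3 : ∀ x ∈ Set.Ioi M, f x = 0 := by
    intro x hx
    simp only [hfdef, Fcut, if_neg (show ¬ x ≤ M ^ (1 - Υ) from not_le.2 (lt_trans hAM hx)),
      if_neg (show ¬ x ≤ M from not_le.2 (show M < x from hx))]
    simp
  -- continuity of g2 on Icc A M
  have hg2cont : ContinuousOn g2 (Set.Icc A M) := by
    apply ContinuousOn.mul
    · apply Continuous.comp_continuousOn Complex.continuous_ofReal
      apply ContinuousOn.div_const
      apply ContinuousOn.log
      · exact continuousOn_const.div continuousOn_id (fun x hx => (lt_of_lt_of_le hA0 hx.1).ne')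
      · intro x hx
        have hx0 : 0 < x := lt_of_lt_of_le hA0 hx.1
        positivity
    · apply ContinuousOn.cpow
      · exact Complex.continuous_ofReal.continuousOn
      · exact continuousOn_const
      · intro x hx
        exact Complex.ofReal_mem_slitPlane.2 (lt_of_lt_of_le hA0 hx.1)
  -- integrability pieces
  have hi1 : IntegrableOn f (Set.Ioc 0 A) := by
    have : IntervalIntegrable (fun x:ℝ => (x:ℂ)^(w-1)) volume 0 A :=
      intervalIntegral.intervalIntegrable_cpow' hre
    rw [intervalIntegrable_iff_integrableOn_Ioc_of_le hA0.le] at this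
    exact this.congr_fun (fun x hx => (hf1 x hx).symm) measurableSet_Ioc
  have hi2g : IntegrableOn g2 (Set.Ioc A M) :=
    (hg2cont.integrableOn_Icc).mono_set Set.Ioc_subset_Icc_self
  have hi2 : IntegrableOn f (Set.Ioc A M) :=
    hi2g.congr_fun (fun x hx => (hf2 x hx).symm) measurableSet_Ioc
  have hi3 : IntegrableOn f (Set.Ioi M) := by
    apply (integrableOn_congr_fun (fun x hx => hf3 x hx) measurableSet_Ioi).2
    exact integrableOn_zero
  have hi12 : IntegrableOn f (Set.Ioc 0 M) := by
    rw [← Set.Ioc_union_Ioc_eq_Ioc hA0.le hAM.le]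
    exact hi1.union hi2
  have hint : IntegrableOn f (Set.Ioi 0) := by
    rw [← Set.Ioc_union_Ioi_eq_Ioi hM0.le]
    exact hi12.union hi3
  refine ⟨hint, ?_⟩
  -- split the integral
  have hsplit1 : (∫ x in Set.Ioi (0:ℝ), f x) = ∫ x in Set.Ioc 0 M, f x := by
    rw [← Set.Ioc_union_Ioi_eq_Ioi hM0.le,
      setIntegral_union (Set.Ioc_disjoint_Ioi le_rfl) measurableSet_Ioi hi12 hi3]
    rw [setIntegral_congr_fun measurableSet_Ioi hf3]
    simp
  have hsplit2 : (∫ x in Set.Ioc (0:ℝ) M, f x)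
      = (∫ x in Set.Ioc (0:ℝ) A, f x) + ∫ x in Set.Ioc A M, f x := by
    rw [← Set.Ioc_union_Ioc_eq_Ioc hA0.le hAM.le,
      setIntegral_union (by
        rw [Set.disjoint_left]; intro x h1 h2; exact absurd h1.2 (not_le.2 h2.1))
        measurableSet_Ioc hi1 hi2]
  -- first piece
  have hI1 : (∫ x in Set.Ioc (0:ℝ) A, f x) = (A:ℂ)^w / w := by
    rw [setIntegral_congr_fun measurableSet_Ioc hf1,
      ← intervalIntegral.integral_of_le hA0.le,
      integral_cpow (Or.inl hre)]
    rw [sub_add_cancel]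
    simp [Complex.zero_cpow hw0]
  -- FTC on [A, M]
  set G : ℝ → ℂ := fun x =>
    (((Real.log M :ℂ) - (Real.log x:ℂ)) * ((x:ℂ)^w / w) + ((x:ℂ)^w / w) / w)
      / ((Υ:ℂ) * (Real.log M :ℂ)) with hGdef
  have hc0 : ((Υ:ℂ) * (Real.log M :ℂ)) ≠ 0 := by
    simp only [ne_eq, mul_eq_zero, Complex.ofReal_eq_zero]
    push_neg
    exact ⟨hΥ₀.ne', hlogM.ne'⟩
  have hderiv : ∀ x ∈ Set.uIcc A M, HasDerivAt G (g2 x) x := by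
    intro x hx
    rw [Set.uIcc_of_le hAM.le] at hx
    have hx0 : (0:ℝ) < x := lt_of_lt_of_le hA0 hx.1
    have hP : HasDerivAt (fun y:ℝ => (y:ℂ)^w / w) ((x:ℂ)^(w-1)) x := by
      have := hasDerivAt_ofReal_cpow_const' hx0.ne' hw1
      rw [sub_add_cancel] at this
      exact this
    have hL : HasDerivAt (fun y:ℝ => ((Real.log M :ℂ) - (Real.log y:ℂ)))
        (-(((x⁻¹:ℝ)):ℂ)) x := by
      simpa using ((Real.hasDerivAt_log hx0.ne').ofReal_comp).const_sub
        ((Real.log M : ℂ))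
    have hsum := ((hL.mul hP).add (hP.div_const w)).div_const ((Υ:ℂ) * (Real.log M :ℂ))
    convert hsum using 1
    · rfl
    · rfl
    have hxc : ((x:ℝ):ℂ) ≠ 0 := by exact_mod_cast hx0.ne'
    have hxw : (x:ℂ)^w = (x:ℂ)^(w-1) * (x:ℂ) := by
      conv_lhs => rw [show w = (w-1)+1 by ring]
      rw [Complex.cpow_add _ _ hxc, Complex.cpow_one]
    simp only [hg2def, Real.log_div hM0.ne' hx0.ne', Complex.ofReal_div,
      Complex.ofReal_sub, Complex.ofReal_mul, Complex.ofReal_inv, hxw]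
    field_simp
    ring
  have hg2int : IntervalIntegrable g2 volume A M := by
    rw [intervalIntegrable_iff_integrableOn_Ioc_of_le hAM.le]
    exact hi2g
  have hI2 : (∫ x in Set.Ioc A M, f x) = G M - G A := by
    rw [setIntegral_congr_fun measurableSet_Ioc hf2,
      ← intervalIntegral.integral_of_le hAM.le]
    exact intervalIntegral.integral_eq_sub_of_hasDerivAt hderiv hg2int
  -- values of G
  have hAw : ((A:ℝ):ℂ) ^ w = (M:ℂ) ^ ((1 - (Υ:ℂ)) * w) := by
    rw [hAdef, Complex.ofReal_cpow hM0.le, Complex.cpow_mul]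
    · push_cast; ring_nf
    · rw [← Complex.ofReal_log hM0.le]; simp; positivity
    · rw [← Complex.ofReal_log hM0.le]; simp; positivity
  have hlc : ((Real.log M : ℝ):ℂ) ≠ 0 := by exact_mod_cast hlogM.ne'
  have hΥc : ((Υ:ℝ):ℂ) ≠ 0 := by exact_mod_cast hΥ₀.ne'
  have hcast : ((Real.log A : ℝ):ℂ) = (1 - (Υ:ℂ)) * ((Real.log M : ℝ):ℂ) := by
    rw [hlogA]; push_cast; ring
  rw [hsplit1, hsplit2, hI1, hI2]
  simp only [hGdef]
  rw [hcast, ← hAw]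
  exact mellin_Fcut_aux _ _ _ _ _ hw0 hΥc hlc
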